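/- For every m ∈ ℝ, the equilibrium e3^m = (0,0,m) of the Rabinovich system is nonlinearly (Lyapunov) stable: for every ε > 0 there exists δ > 0 such that every solution x : [0,∞) → ℝ³ of the Rabinovich system with ‖x(0) − (0,0,m)‖ < δ satisfies ‖x(t) − (0,0,m)‖ < ε for all t ≥ 0. -/

import Mathlib

open Matrix
set_option maxHeartbeats 1000000

/-- The Rabinovich vector field X(x₁,x₂,x₃) = (x₂x₃, −x₁x₃, x₁x₂). -/
def rabinovichField (x : Fin 3 → ℝ) : Fin 3 → ℝ :=
  ![x 1 * x 2, -(x 0 * x 2), x 0 * x 1]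

/-- x : [0,∞) → ℝ³ is a solution of the Rabinovich system. -/
def IsSolutionOnIci (x : ℝ → Fin 3 → ℝ) : Prop :=
  ∀ t ∈ Set.Ici (0 : ℝ), ∀ i : Fin 3,
    HasDerivWithinAt (fun s => x s i) (rabinovichField (x t) i) (Set.Ici (0 : ℝ)) t

/-- A function with vanishing right derivative on `[0,∞)` is constant there. -/
lemma rab_const_of_deriv_zero (f : ℝ → ℝ)
    (hf : ∀ s ∈ Set.Ici (0 : ℝ), HasDerivWithinAt f 0 (Set.Ici (0 : ℝ)) s)
    {t : ℝ} (ht : 0 ≤ t) : f t = f 0 := by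
  have hcont : ContinuousOn f (Set.Icc (0 : ℝ) t) := fun s hs =>
    ((hf s hs.1).continuousWithinAt).mono (fun y hy => hy.1)
  have hderiv : ∀ s ∈ Set.Ico (0 : ℝ) t, HasDerivWithinAt f 0 (Set.Ici s) s := fun s hs =>
    (hf s hs.1).mono (fun y hy => hs.1.trans hy)
  exact constant_of_has_deriv_right_zero hcont hderiv t ⟨ht, le_rfl⟩

/-- A continuous nowhere-vanishing function on `[0,∞)` keeps its sign. -/
lemma rab_sign (f : ℝ → ℝ) (hf : ContinuousOn f (Set.Ici (0 : ℝ)))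
    (hne : ∀ s ∈ Set.Ici (0 : ℝ), f s ≠ 0) {t : ℝ} (ht : 0 ≤ t) :
    0 < f 0 * f t := by
  rcases lt_trichotomy (f 0 * f t) 0 with h | h | h
  · exfalso
    have hsub : Set.uIcc (0 : ℝ) t = Set.Icc 0 t := Set.uIcc_of_le ht
    have hc : ContinuousOn f (Set.uIcc (0 : ℝ) t) := by
      rw [hsub]; exact hf.mono (fun y hy => hy.1)
    have h0 : (0 : ℝ) ∈ Set.uIcc (f 0) (f t) := by
      rcases mul_neg_iff.mp h with ⟨h1, h2⟩ | ⟨h1, h2⟩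
      · exact Set.mem_uIcc.2 (Or.inr ⟨h2.le, h1.le⟩)
      · exact Set.mem_uIcc.2 (Or.inl ⟨h1.le, h2.le⟩)
    obtain ⟨s, hs, hfs⟩ := intermediate_value_uIcc hc h0
    rw [hsub] at hs
    exact hne s hs.1 hfs
  · exact absurd h (mul_ne_zero (hne 0 Set.self_mem_Ici) (hne t ht))
  · exact h

/-- The two conserved quantities of the Rabinovich system. -/
lemma rab_conserved (x : ℝ → Fin 3 → ℝ) (hx : IsSolutionOnIci x) {t : ℝ} (ht : 0 ≤ t) :
    x t 0 * x t 0 + x t 1 * x t 1 = x 0 0 * x 0 0 + x 0 1 * x 0 1 ∧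
    x t 1 * x t 1 + x t 2 * x t 2 = x 0 1 * x 0 1 + x 0 2 * x 0 2 := by
  have d0 : ∀ s ∈ Set.Ici (0 : ℝ),
      HasDerivWithinAt (fun u => x u 0) (x s 1 * x s 2) (Set.Ici (0 : ℝ)) s :=
    fun s hs => hx s hs 0
  have d1 : ∀ s ∈ Set.Ici (0 : ℝ),
      HasDerivWithinAt (fun u => x u 1) (-(x s 0 * x s 2)) (Set.Ici (0 : ℝ)) s :=
    fun s hs => hx s hs 1
  have d2 : ∀ s ∈ Set.Ici (0 : ℝ),
      HasDerivWithinAt (fun u => x u 2) (x s 0 * x s 1) (Set.Ici (0 : ℝ)) s :=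
    fun s hs => hx s hs 2
  constructor
  · refine rab_const_of_deriv_zero (fun u => x u 0 * x u 0 + x u 1 * x u 1)
      (fun s hs => ?_) ht
    have h : HasDerivWithinAt (fun u => x u 0 * x u 0 + x u 1 * x u 1) _ (Set.Ici (0 : ℝ)) s := ((d0 s hs).mul (d0 s hs)).add ((d1 s hs).mul (d1 s hs))
    convert h using 1
    ring
  · refine rab_const_of_deriv_zero (fun u => x u 1 * x u 1 + x u 2 * x u 2)
      (fun s hs => ?_) ht
    have h : HasDerivWithinAt (fun u => x u 1 * x u 1 + x u 2 * x u 2) _ (Set.Ici (0 : ℝ)) s := ((d1 s hs).mul (d1 s hs)).add ((d2 s hs).mul (d2 s hs))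
    convert h using 1
    ring

lemma rab_mul_self_lt {a c : ℝ} (h : |a| < c) : a * a < c * c := by
  nlinarith [abs_nonneg a, abs_mul_abs_self a]

lemma rab_abs_lt {a c : ℝ} (hc : 0 < c) (h : a * a < c * c) : |a| < c := by
  nlinarith [abs_nonneg a, abs_mul_abs_self a]

/-- For every m ∈ ℝ, the equilibrium (0,0,m) of the Rabinovich system is
nonlinearly (Lyapunov) stable. -/
theorem rabinovich_e3_nonlinearly_stable (m : ℝ) :
    ∀ ε > (0 : ℝ), ∃ δ > (0 : ℝ), ∀ x : ℝ → Fin 3 → ℝ,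
      IsSolutionOnIci x → ‖x 0 - ![0, 0, m]‖ < δ →
        ∀ t ≥ (0 : ℝ), ‖x t - ![0, 0, m]‖ < ε := by
  intro ε hε
  by_cases hm : m = 0
  · -- equilibrium at origin in the third coordinate
    subst hm
    refine ⟨ε / 3, by linarith, fun x hx hclose t ht => ?_⟩
    have hδ : (0 : ℝ) < ε / 3 := by linarith
    have hcomp : ∀ i : Fin 3, |x 0 i - (![0, 0, (0:ℝ)]) i| < ε / 3 := by
      intro i
      have := (norm_le_pi_norm (x 0 - ![0, 0, (0:ℝ)]) i).trans_lt hclose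
      simpa [Real.norm_eq_abs] using this
    have h0 := hcomp 0
    have h1 := hcomp 1
    have h2 := hcomp 2
    simp only [Matrix.cons_val_zero, Matrix.cons_val_one, Matrix.head_cons, sub_zero] at h0 h1 h2
    have h2' : |x 0 2| < ε / 3 := by simpa using h2
    obtain ⟨hF, hG⟩ := rab_conserved x hx ht
    rw [pi_norm_lt_iff hε]
    intro i
    have hsq0 : x 0 0 * x 0 0 < (ε/3) * (ε/3) := rab_mul_self_lt h0
    have hsq1 : x 0 1 * x 0 1 < (ε/3) * (ε/3) := rab_mul_self_lt h1
    have hsq2 : x 0 2 * x 0 2 < (ε/3) * (ε/3) := rab_mul_self_lt h2'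
    have hring : 9 * ((ε/3) * (ε/3)) = ε * ε := by ring
    have ht0 : x t 0 * x t 0 < ε * ε := by
      linarith [hF, hsq0, hsq1, mul_self_nonneg (x t 1), mul_self_nonneg ε]
    have ht1 : x t 1 * x t 1 < ε * ε := by
      linarith [hF, hsq0, hsq1, mul_self_nonneg (x t 0), mul_self_nonneg ε]
    have ht2 : x t 2 * x t 2 < ε * ε := by
      linarith [hG, hsq1, hsq2, mul_self_nonneg (x t 1), mul_self_nonneg ε]
    fin_cases i
    · show ‖x t 0 - 0‖ < ε
      rw [Real.norm_eq_abs, sub_zero]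
      exact rab_abs_lt hε ht0
    · show ‖x t 1 - 0‖ < ε
      rw [Real.norm_eq_abs, sub_zero]
      exact rab_abs_lt hε ht1
    · show ‖x t 2 - 0‖ < ε
      rw [Real.norm_eq_abs, sub_zero]
      exact rab_abs_lt hε ht2
  · -- m ≠ 0
    have hmabs : (0 : ℝ) < |m| := abs_pos.mpr hm
    set δ := min (ε / 5) (|m| / 4) with hδdef
    have hδpos : 0 < δ := lt_min (by linarith) (by linarith)
    have hδε : δ ≤ ε / 5 := min_le_left _ _
    have hδm : δ ≤ |m| / 4 := min_le_right _ _
    refine ⟨δ, hδpos, fun x hx hclose t ht => ?_⟩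
    have hcomp : ∀ i : Fin 3, |x 0 i - (![0, 0, m]) i| < δ := by
      intro i
      have := (norm_le_pi_norm (x 0 - ![0, 0, m]) i).trans_lt hclose
      simpa [Real.norm_eq_abs] using this
    have h0 := hcomp 0
    have h1 := hcomp 1
    have h2 := hcomp 2
    simp only [Matrix.cons_val_zero, Matrix.cons_val_one, Matrix.head_cons, sub_zero] at h0 h1 h2
    have h2' : |x 0 2 - m| < δ := by simpa using h2
    have hsq0 : x 0 0 * x 0 0 < δ * δ := rab_mul_self_lt h0
    have hsq1 : x 0 1 * x 0 1 < δ * δ := rab_mul_self_lt h1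
    -- |c₀² - m²| < δ(2|m| + δ)
    have hc0 : |x 0 2 ^ 2 - m ^ 2| < δ * (2 * |m| + δ) := by
      have habs : |x 0 2 ^ 2 - m ^ 2| = |x 0 2 - m| * |x 0 2 + m| := by
        rw [← abs_mul]; ring_nf
      rw [habs]
      have hsum : |x 0 2 + m| ≤ |x 0 2 - m| + 2 * |m| := by
        have := abs_add_le (x 0 2 - m) (2 * m)
        simp only [abs_mul] at this ⊢
        calc |x 0 2 + m| = |(x 0 2 - m) + 2 * m| := by ring_nf
          _ ≤ |x 0 2 - m| + |2 * m| := abs_add_le _ _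
          _ = |x 0 2 - m| + 2 * |m| := by rw [abs_mul]; norm_num
      nlinarith [abs_nonneg (x 0 2 - m), abs_nonneg (x 0 2 + m)]
    -- uniform bound on |c(s)² - m²| for all s ≥ 0
    have hη : ∀ s, 0 ≤ s → |x s 2 ^ 2 - m ^ 2| < 3 * |m| * δ := by
      intro s hs
      obtain ⟨hF, hG⟩ := rab_conserved x hx hs
      have hb : x s 1 * x s 1 ≤ x 0 0 * x 0 0 + x 0 1 * x 0 1 := by nlinarith [sq_nonneg (x s 0)]
      have key : x s 2 ^ 2 - m ^ 2 = (x 0 2 ^ 2 - m ^ 2) + (x 0 1 * x 0 1 - x s 1 * x s 1) := by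
        nlinarith [hG]
      rw [key]
      have habs := abs_add_le (x 0 2 ^ 2 - m ^ 2) (x 0 1 * x 0 1 - x s 1 * x s 1)
      have hb2 : |x 0 1 * x 0 1 - x s 1 * x s 1| ≤ x 0 1 * x 0 1 + x s 1 * x s 1 := by
        rw [abs_le]; constructor <;> nlinarith [sq_nonneg (x 0 1), sq_nonneg (x s 1)]
      have hδm' : 4 * δ ≤ |m| := by linarith
      calc |(x 0 2 ^ 2 - m ^ 2) + (x 0 1 * x 0 1 - x s 1 * x s 1)|
          ≤ |x 0 2 ^ 2 - m ^ 2| + |x 0 1 * x 0 1 - x s 1 * x s 1| := habs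
        _ < 3 * |m| * δ := by nlinarith [sq_nonneg (x s 1)]
    -- c never vanishes
    have hm2 : ∀ s ∈ Set.Ici (0 : ℝ), x s 2 ≠ 0 := by
      intro s hs hzero
      have h := hη s hs
      rw [hzero] at h
      have heq : |(0:ℝ) ^ 2 - m ^ 2| = m ^ 2 := by
        norm_num [abs_of_nonneg (sq_nonneg m)]
      rw [heq] at h
      nlinarith [sq_abs m]
    have hcont : ContinuousOn (fun s => x s 2) (Set.Ici (0 : ℝ)) :=
      fun s hs => (hx s hs 2).continuousWithinAt
    have hsign := rab_sign _ hcont hm2 ht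
    -- m and x 0 2 have the same sign
    have hmc0 : 0 < m * x 0 2 := by
      have : |m| * |x 0 2 - m| < |m| * |m| := by
        have : |x 0 2 - m| < |m| := lt_of_lt_of_le (lt_of_lt_of_le h2' hδm) (by linarith)
        nlinarith
      nlinarith [abs_mul m (x 0 2 - m), le_abs_self (m * (x 0 2 - m)),
        neg_abs_le (m * (x 0 2 - m)), sq_abs m]
    have hmct : 0 < m * x t 2 := by
      have hc0ne := hm2 0 Set.self_mem_Ici
      nlinarith [sq_nonneg (x 0 2), hsign, hmc0, sq_abs (x 0 2)]
    -- |c + m| ≥ |m|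
    have hcm : |m| ≤ |x t 2 + m| := by
      nlinarith [sq_abs (x t 2 + m), sq_abs m, abs_nonneg (x t 2 + m), abs_nonneg m, hmct,
        sq_nonneg (x t 2)]
    -- conclude |c - m| < 3δ
    have hprod : |x t 2 - m| * |x t 2 + m| = |x t 2 ^ 2 - m ^ 2| := by
      rw [← abs_mul]; ring_nf
    have hct : |x t 2 - m| < 3 * δ := by
      have hη' := hη t ht
      nlinarith [abs_nonneg (x t 2 - m), abs_nonneg (x t 2 + m)]
    -- component bounds for the first two coordinates
    obtain ⟨hF, hG⟩ := rab_conserved x hx ht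
    have hδδ : δ * δ ≤ (ε/5) * (ε/5) := mul_le_mul hδε hδε hδpos.le (by linarith)
    have hring : 25 * ((ε/5) * (ε/5)) = ε * ε := by ring
    have ht0 : x t 0 * x t 0 < ε * ε := by
      linarith [hF, hsq0, hsq1, mul_self_nonneg (x t 1), mul_self_nonneg ε]
    have ht1 : x t 1 * x t 1 < ε * ε := by
      linarith [hF, hsq0, hsq1, mul_self_nonneg (x t 0), mul_self_nonneg ε]
    rw [pi_norm_lt_iff hε]
    intro i
    fin_cases i
    · show ‖x t 0 - 0‖ < ε
      rw [Real.norm_eq_abs, sub_zero]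
      exact rab_abs_lt hε ht0
    · show ‖x t 1 - 0‖ < ε
      rw [Real.norm_eq_abs, sub_zero]
      exact rab_abs_lt hε ht1
    · show ‖x t 2 - m‖ < ε
      rw [Real.norm_eq_abs]
      linarith
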